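/- Let α > −1/2 be real and define the normalized Bessel function 𝒥_α : ℂ → ℂ by 𝒥_α(z) = (1/(2^{α−1} √π Γ(α+1/2))) ∫_0^1 (1−t²)^{α−1/2} cos(zt) dt. Then 𝒥_α is an entire function and is positive definite on all of ℂ (i.e. positive definite on the full strip S_{−∞,+∞} = ℂ). In particular the function z ↦ (1/π) ∫_{−1}^{1} e^{izt} (1−t²)^{−1/2} dt, which agrees with the Bessel function J₀ on the real axis, is an entire positive definite function. -/

import Mathlib

open Complex MeasureTheory Filter Set Topology
open scoped Real BigOperators ComplexOrder

noncomputable section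

/-- `f : ℝ → ℂ` is positive definite. -/
def IsPosDefFun (f : ℝ → ℂ) : Prop :=
  ∀ (n : ℕ) (x : Fin n → ℝ) (ξ : Fin n → ℂ),
    0 ≤ ∑ k, ∑ l, f (x k - x l) * ξ k * (starRingEnd ℂ) (ξ l)

/-- `f` is positive definite on `S ⊆ ℂ`. -/
def IsPosDefOnC (f : ℂ → ℂ) (S : Set ℂ) : Prop :=
  ∀ (n : ℕ) (z : Fin n → ℂ), (∀ k l, z k - (starRingEnd ℂ) (z l) ∈ S) →
    ∀ ξ : Fin n → ℂ,
      0 ≤ ∑ k, ∑ l, f (z k - (starRingEnd ℂ) (z l)) * ξ k * (starRingEnd ℂ) (ξ l)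

/-- `f` is co-positive definite on `T ⊆ ℂ`. -/
def IsCoPosDefOnC (f : ℂ → ℂ) (T : Set ℂ) : Prop :=
  ∀ (n : ℕ) (z : Fin n → ℂ), (∀ k l, z k + (starRingEnd ℂ) (z l) ∈ T) →
    ∀ ξ : Fin n → ℂ,
      0 ≤ ∑ k, ∑ l, f (z k + (starRingEnd ℂ) (z l)) * ξ k * (starRingEnd ℂ) (ξ l)

/-- `G : ℝ → ℂ` is co-positive definite on `I ⊆ ℝ`. -/
def IsCoPosDefOnR (G : ℝ → ℂ) (I : Set ℝ) : Prop :=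
  ∀ (n : ℕ) (x : Fin n → ℝ), (∀ k l, x k + x l ∈ I) →
    ∀ ξ : Fin n → ℂ,
      0 ≤ ∑ k, ∑ l, G (x k + x l) * ξ k * (starRingEnd ℂ) (ξ l)

/-- Horizontal strip `S_{a,b}`. -/
def HStrip (a b : EReal) : Set ℂ := {z | a < (z.im : EReal) ∧ (z.im : EReal) < b}

/-- Vertical strip `T_{a,b}`. -/
def VStrip (a b : EReal) : Set ℂ := {z | a < (z.re : EReal) ∧ (z.re : EReal) < b}

/-- `μ` is exponentially finite with respect to the interval `(a,b)`. -/
def ExpFinite (μ : Measure ℝ) (a b : EReal) : Prop :=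
  ∀ y : ℝ, a < (y : EReal) → (y : EReal) < b →
    Integrable (fun t : ℝ => Real.exp (-y * t)) μ

/-- The normalized Bessel function of the first kind, defined by its Poisson-type integral. -/
def normBesselJ (α : ℝ) (z : ℂ) : ℂ :=
  (1 / ((2 : ℝ) ^ (α - 1) * Real.sqrt π * Real.Gamma (α + 1 / 2)) : ℝ) *
    ∫ t in Set.Ioo (0 : ℝ) 1, (((1 - t ^ 2) ^ (α - 1 / 2) : ℝ) : ℂ) * Complex.cos (z * t)

/-- The Bessel function `J₀`, defined by its power series. -/
def besselJ0 (z : ℂ) : ℂ :=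
  ∑' m : ℕ, (-1) ^ m / ((m.factorial : ℂ) ^ 2) * (z / 2) ^ (2 * m)

namespace S19

lemma intOn_w {p : ℝ} (hp : -1 < p) :
    IntegrableOn (fun t : ℝ => (1 - t^2) ^ p) (Ioo (-1:ℝ) 1) := by
  have h1 : IntegrableOn (fun t : ℝ => (1-t)^p) (Ioo (-1:ℝ) 1) := by
    have h := ((intervalIntegral.intervalIntegrable_rpow' (a:=0) (b:=2) hp).comp_sub_left 1).symm
    norm_num at h
    rwa [intervalIntegrable_iff_integrableOn_Ioo_of_le (by norm_num)] at h
  have h2 : IntegrableOn (fun t : ℝ => (1+t)^p) (Ioo (-1:ℝ) 1) := by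
    have h := (intervalIntegral.intervalIntegrable_rpow' (a:=0) (b:=2) hp).comp_add_right 1
    norm_num at h
    rw [intervalIntegrable_iff_integrableOn_Ioo_of_le (by norm_num)] at h
    exact h.congr_fun (fun x _ => by rw [add_comm]) measurableSet_Ioo
  set C := max 1 ((2:ℝ)^p) with hCdef
  have hC1 : (1:ℝ) ≤ C := le_max_left _ _
  have hg : IntegrableOn (fun t => C * ((1-t)^p + (1+t)^p)) (Ioo (-1:ℝ) 1) :=
    (h1.add h2).const_mul C
  refine Integrable.mono hg ?_ ?_
  · exact (Measurable.aestronglyMeasurable (by fun_prop)).restrict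
  · filter_upwards [ae_restrict_mem measurableSet_Ioo] with t ht
    have ha : (0:ℝ) < 1 - t := by linarith [ht.2]
    have hb : (0:ℝ) < 1 + t := by linarith [ht.1]
    have hprod : (1 - t^2)^p = (1-t)^p * (1+t)^p := by
      rw [← Real.mul_rpow ha.le hb.le]; ring_nf
    have hwa : (0:ℝ) ≤ (1-t)^p := Real.rpow_nonneg ha.le p
    have hwb : (0:ℝ) ≤ (1+t)^p := Real.rpow_nonneg hb.le p
    have key : (1 - t^2)^p ≤ C * ((1-t)^p + (1+t)^p) := by
      rcases le_or_gt p 0 with hple | hppos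
      · rcases le_or_gt t 0 with htle | htpos
        · have : (1-t)^p ≤ 1 := Real.rpow_le_one_of_one_le_of_nonpos (by linarith) hple
          rw [hprod]; nlinarith
        · have : (1+t)^p ≤ 1 := Real.rpow_le_one_of_one_le_of_nonpos (by linarith) hple
          rw [hprod]; nlinarith
      · have h2p : (1+t)^p ≤ C := le_trans (Real.rpow_le_rpow hb.le (by linarith [ht.2]) hppos.le) (le_max_right _ _)
        rw [hprod]; nlinarith
    have h0 : (0:ℝ) ≤ (1 - t^2)^p := Real.rpow_nonneg (by nlinarith) p
    rw [Real.norm_of_nonneg h0, Real.norm_of_nonneg (by positivity)]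
    exact key

lemma intOn_w_mul {p : ℝ} (hp : -1 < p) {s : Set ℝ} (hs : s ⊆ Ioo (-1:ℝ) 1)
    (hms : MeasurableSet s) {g : ℝ → ℂ} (hg : Continuous g) :
    IntegrableOn (fun t => (((1 - t^2) ^ p : ℝ) : ℂ) * g t) s := by
  obtain ⟨C, hC⟩ : ∃ C, ∀ x ∈ Icc (-1:ℝ) 1, ‖g x‖ ≤ C :=
    isCompact_Icc.exists_bound_of_continuousOn hg.continuousOn
  have hC0 : 0 ≤ C := le_trans (norm_nonneg _) (hC 0 (by norm_num))
  have hw : IntegrableOn (fun t => (1-t^2)^p * C) s := ((intOn_w hp).mono_set hs).mul_const C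
  refine Integrable.mono hw ?_ ?_
  · exact (Measurable.aestronglyMeasurable (by fun_prop)).restrict
  · filter_upwards [ae_restrict_mem hms] with t ht
    have ht' := hs ht
    have h0 : (0:ℝ) ≤ (1 - t^2)^p := Real.rpow_nonneg (by nlinarith [ht'.1, ht'.2]) p
    rw [norm_mul, Complex.norm_real, Real.norm_of_nonneg h0,
      Real.norm_of_nonneg (by positivity)]
    exact mul_le_mul_of_nonneg_left (hC t ⟨ht'.1.le, ht'.2.le⟩) h0


lemma norm_cexp_le (z : ℂ) : ‖Complex.exp z‖ ≤ Real.exp ‖z‖ := by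
  rw [Complex.norm_exp]
  exact Real.exp_le_exp.2 (Complex.re_le_norm z)

lemma norm_csin_le (z : ℂ) : ‖Complex.sin z‖ ≤ Real.exp ‖z‖ := by
  have h1 : ‖Complex.exp (-z*I)‖ ≤ Real.exp ‖z‖ := by
    simpa [norm_mul] using norm_cexp_le (-z*I)
  have h2 : ‖Complex.exp (z*I)‖ ≤ Real.exp ‖z‖ := by
    simpa [norm_mul] using norm_cexp_le (z*I)
  rw [Complex.sin]
  calc ‖(Complex.exp (-z*I) - Complex.exp (z*I)) * I / 2‖
      = ‖Complex.exp (-z*I) - Complex.exp (z*I)‖ / 2 := by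
        simp [norm_div, norm_mul]
    _ ≤ (‖Complex.exp (-z*I)‖ + ‖Complex.exp (z*I)‖) / 2 := by
        gcongr; exact norm_sub_le _ _
    _ ≤ (Real.exp ‖z‖ + Real.exp ‖z‖) / 2 := by gcongr
    _ = Real.exp ‖z‖ := by ring

lemma norm_ccos_le (z : ℂ) : ‖Complex.cos z‖ ≤ Real.exp ‖z‖ := by
  have h1 : ‖Complex.exp (-z*I)‖ ≤ Real.exp ‖z‖ := by
    simpa [norm_mul] using norm_cexp_le (-z*I)
  have h2 : ‖Complex.exp (z*I)‖ ≤ Real.exp ‖z‖ := by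
    simpa [norm_mul] using norm_cexp_le (z*I)
  rw [Complex.cos]
  calc ‖(Complex.exp (z*I) + Complex.exp (-z*I)) / 2‖
      = ‖Complex.exp (z*I) + Complex.exp (-z*I)‖ / 2 := by simp [norm_div]
    _ ≤ (‖Complex.exp (z*I)‖ + ‖Complex.exp (-z*I)‖) / 2 := by
        gcongr; exact norm_add_le _ _
    _ ≤ (Real.exp ‖z‖ + Real.exp ‖z‖) / 2 := by gcongr
    _ = Real.exp ‖z‖ := by ring


lemma diff_cos_int {p : ℝ} (hp : -1 < p) :
    Differentiable ℂ (fun z => ∫ t in Ioo (0:ℝ) 1, (((1 - t^2)^p : ℝ):ℂ) * Complex.cos (z*t)) := by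
  intro z₀
  have hsub : Ioo (0:ℝ) 1 ⊆ Ioo (-1:ℝ) 1 := Ioo_subset_Ioo (by norm_num) le_rfl
  have key := hasDerivAt_integral_of_dominated_loc_of_deriv_le
    (F := fun (z : ℂ) (t : ℝ) => (((1 - t^2)^p : ℝ):ℂ) * Complex.cos (z*t))
    (F' := fun (z : ℂ) (t : ℝ) => (((1 - t^2)^p : ℝ):ℂ) * (-Complex.sin (z*t) * t))
    (x₀ := z₀) (bound := fun t => (1 - t^2)^p * Real.exp (‖z₀‖+1))
    (μ := volume.restrict (Ioo (0:ℝ) 1))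
    (Metric.ball_mem_nhds z₀ one_pos) ?_ ?_ ?_ ?_ ?_ ?_
  · exact key.2.differentiableAt
  · exact Eventually.of_forall fun z => (Measurable.aestronglyMeasurable (by fun_prop)).restrict
  · exact intOn_w_mul hp hsub measurableSet_Ioo (by fun_prop)
  · exact (Measurable.aestronglyMeasurable (by fun_prop)).restrict
  · filter_upwards [ae_restrict_mem measurableSet_Ioo] with t ht
    intro z hz
    have hw0 : (0:ℝ) ≤ (1 - t^2)^p := Real.rpow_nonneg (by nlinarith [ht.1, ht.2]) p
    have hz1 : ‖z‖ ≤ ‖z₀‖ + 1 := by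
      have := mem_ball_iff_norm.1 hz
      calc ‖z‖ = ‖z₀ + (z - z₀)‖ := by ring_nf
        _ ≤ ‖z₀‖ + ‖z - z₀‖ := norm_add_le _ _
        _ ≤ ‖z₀‖ + 1 := by linarith
    have ht1 : ‖(t:ℂ)‖ ≤ 1 := by
      rw [Complex.norm_real, Real.norm_of_nonneg ht.1.le]; exact ht.2.le
    have hsin : ‖Complex.sin (z*t)‖ ≤ Real.exp (‖z₀‖+1) := by
      refine le_trans (norm_csin_le _) (Real.exp_le_exp.2 ?_)
      calc ‖z * (t:ℂ)‖ = ‖z‖ * ‖(t:ℂ)‖ := norm_mul _ _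
        _ ≤ (‖z₀‖+1) * 1 := by
            exact mul_le_mul hz1 ht1 (norm_nonneg _) (by positivity)
        _ = ‖z₀‖ + 1 := by ring
    calc ‖(((1 - t^2)^p : ℝ):ℂ) * (-Complex.sin (z*t) * t)‖
        = (1 - t^2)^p * (‖Complex.sin (z*t)‖ * ‖(t:ℂ)‖) := by
          rw [norm_mul, norm_mul, norm_neg, Complex.norm_real, Real.norm_of_nonneg hw0]
      _ ≤ (1 - t^2)^p * (Real.exp (‖z₀‖+1) * 1) := by
          exact mul_le_mul_of_nonneg_left
            (mul_le_mul hsin ht1 (norm_nonneg _) (by positivity)) hw0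
      _ = (1 - t^2)^p * Real.exp (‖z₀‖+1) := by ring
  · exact ((intOn_w hp).mono_set hsub).mul_const _
  · refine Eventually.of_forall fun t => fun z _ => ?_
    have h : HasDerivAt (fun z : ℂ => Complex.cos (z * t)) (-Complex.sin (z*t) * t) z := by
      exact (Complex.hasDerivAt_cos (z*(t:ℂ))).comp z (hasDerivAt_mul_const (t:ℂ))
    exact h.const_mul _

lemma diff_exp_int {p : ℝ} (hp : -1 < p) :
    Differentiable ℂ (fun z => ∫ t in Ioo (-1:ℝ) 1,
      Complex.exp (I*z*t) * (((1 - t^2)^p : ℝ):ℂ)) := by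
  intro z₀
  have key := hasDerivAt_integral_of_dominated_loc_of_deriv_le
    (F := fun (z : ℂ) (t : ℝ) => Complex.exp (I*z*t) * (((1 - t^2)^p : ℝ):ℂ))
    (F' := fun (z : ℂ) (t : ℝ) => Complex.exp (I*z*t) * (I*t) * (((1 - t^2)^p : ℝ):ℂ))
    (x₀ := z₀) (bound := fun t => Real.exp (‖z₀‖+1) * (1 - t^2)^p)
    (μ := volume.restrict (Ioo (-1:ℝ) 1))
    (Metric.ball_mem_nhds z₀ one_pos) ?_ ?_ ?_ ?_ ?_ ?_
  · exact key.2.differentiableAt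
  · exact Eventually.of_forall fun z => (Measurable.aestronglyMeasurable (by fun_prop)).restrict
  · exact (intOn_w_mul hp (subset_refl _) measurableSet_Ioo (by fun_prop)).congr_fun
      (fun t _ => mul_comm _ _) measurableSet_Ioo
  · exact (Measurable.aestronglyMeasurable (by fun_prop)).restrict
  · filter_upwards [ae_restrict_mem measurableSet_Ioo] with t ht
    intro z hz
    have hw0 : (0:ℝ) ≤ (1 - t^2)^p := Real.rpow_nonneg (by nlinarith [ht.1, ht.2]) p
    have hz1 : ‖z‖ ≤ ‖z₀‖ + 1 := by
      have := mem_ball_iff_norm.1 hz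
      calc ‖z‖ = ‖z₀ + (z - z₀)‖ := by ring_nf
        _ ≤ ‖z₀‖ + ‖z - z₀‖ := norm_add_le _ _
        _ ≤ ‖z₀‖ + 1 := by linarith
    have ht1 : ‖(t:ℂ)‖ ≤ 1 := by
      rw [Complex.norm_real, Real.norm_eq_abs, abs_le]; constructor <;> [linarith [ht.1]; linarith [ht.2]]
    have hexp : ‖Complex.exp (I*z*t)‖ ≤ Real.exp (‖z₀‖+1) := by
      refine le_trans (norm_cexp_le _) (Real.exp_le_exp.2 ?_)
      calc ‖I * z * (t:ℂ)‖ = ‖z‖ * ‖(t:ℂ)‖ := by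
            rw [norm_mul, norm_mul]; simp
        _ ≤ (‖z₀‖+1) * 1 := mul_le_mul hz1 ht1 (norm_nonneg _) (by positivity)
        _ = ‖z₀‖ + 1 := by ring
    have hIt : ‖I * (t:ℂ)‖ ≤ 1 := by rw [norm_mul]; simpa using ht1
    calc ‖Complex.exp (I*z*t) * (I*(t:ℂ)) * (((1 - t^2)^p : ℝ):ℂ)‖
        = ‖Complex.exp (I*z*t)‖ * ‖I*(t:ℂ)‖ * (1 - t^2)^p := by
          rw [norm_mul, norm_mul, Complex.norm_real, Real.norm_of_nonneg hw0]
      _ ≤ Real.exp (‖z₀‖+1) * 1 * (1 - t^2)^p := by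
          exact mul_le_mul_of_nonneg_right
            (mul_le_mul hexp hIt (norm_nonneg _) (by positivity)) hw0
      _ = Real.exp (‖z₀‖+1) * (1 - t^2)^p := by ring
  · exact ((intOn_w hp).const_mul _)
  · refine Eventually.of_forall fun t => fun z _ => ?_
    have h0 : HasDerivAt (fun z:ℂ => I*z*t) (I*t) z := by
      simpa using ((hasDerivAt_id z).const_mul I).mul_const (t:ℂ)
    exact (h0.cexp).mul_const _


lemma sum_sum_mul_conj {n : ℕ} (a ξ : Fin n → ℂ) :
    ∑ k, ∑ l, a k * (starRingEnd ℂ) (a l) * ξ k * (starRingEnd ℂ) (ξ l)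
      = ((Complex.normSq (∑ k, a k * ξ k) : ℝ) : ℂ) := by
  rw [← Complex.mul_conj, map_sum, Finset.sum_mul_sum]
  refine Finset.sum_congr rfl fun k _ => Finset.sum_congr rfl fun l _ => ?_
  rw [map_mul]; ring

lemma pointwise_exp {n : ℕ} (z ξ : Fin n → ℂ) (t c : ℝ) :
    ∑ k, ∑ l, Complex.exp (I * (z k - (starRingEnd ℂ) (z l)) * t) * (c:ℂ) * ξ k
        * (starRingEnd ℂ) (ξ l)
      = ((c * Complex.normSq (∑ k, Complex.exp (I * z k * t) * ξ k) : ℝ) : ℂ) := by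
  have hexp : ∀ k l : Fin n, Complex.exp (I * (z k - (starRingEnd ℂ) (z l)) * t)
      = Complex.exp (I * z k * t) * (starRingEnd ℂ) (Complex.exp (I * z l * t)) := by
    intro k l
    rw [← Complex.exp_conj, ← Complex.exp_add]
    congr 1
    rw [map_mul, map_mul, Complex.conj_I, Complex.conj_ofReal]
    ring
  calc ∑ k, ∑ l, Complex.exp (I * (z k - (starRingEnd ℂ) (z l)) * t) * (c:ℂ) * ξ k
        * (starRingEnd ℂ) (ξ l)
      = ∑ k, ∑ l, (c:ℂ) * (Complex.exp (I * z k * t) * (starRingEnd ℂ) (Complex.exp (I * z l * t))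
          * ξ k * (starRingEnd ℂ) (ξ l)) := by
        refine Finset.sum_congr rfl fun k _ => Finset.sum_congr rfl fun l _ => ?_
        rw [hexp k l]; ring
    _ = (c:ℂ) * ∑ k, ∑ l, Complex.exp (I * z k * t) * (starRingEnd ℂ) (Complex.exp (I * z l * t))
          * ξ k * (starRingEnd ℂ) (ξ l) := by
        simp only [← Finset.mul_sum]
    _ = (c:ℂ) * ((Complex.normSq (∑ k, Complex.exp (I * z k * t) * ξ k) : ℝ) : ℂ) := by
        rw [sum_sum_mul_conj]
    _ = _ := by push_cast; ring

lemma pointwise_cos {n : ℕ} (z ξ : Fin n → ℂ) (t c : ℝ) :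
    ∑ k, ∑ l, (c:ℂ) * Complex.cos ((z k - (starRingEnd ℂ) (z l)) * t) * ξ k
        * (starRingEnd ℂ) (ξ l)
      = ((c * (Complex.normSq (∑ k, Complex.cos (z k * t) * ξ k)
          + Complex.normSq (∑ k, Complex.sin (z k * t) * ξ k)) : ℝ) : ℂ) := by
  have hcos : ∀ k l : Fin n, Complex.cos ((z k - (starRingEnd ℂ) (z l)) * t)
      = Complex.cos (z k * t) * (starRingEnd ℂ) (Complex.cos (z l * t))
        + Complex.sin (z k * t) * (starRingEnd ℂ) (Complex.sin (z l * t)) := by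
    intro k l
    have h1 : (z k - (starRingEnd ℂ) (z l)) * t = z k * t - (starRingEnd ℂ) (z l * (t:ℂ)) := by
      rw [map_mul, Complex.conj_ofReal]; ring
    rw [h1, Complex.cos_sub, Complex.cos_conj, Complex.sin_conj]
  calc ∑ k, ∑ l, (c:ℂ) * Complex.cos ((z k - (starRingEnd ℂ) (z l)) * t) * ξ k
        * (starRingEnd ℂ) (ξ l)
      = ∑ k, ∑ l, ((c:ℂ) * (Complex.cos (z k * t) * (starRingEnd ℂ) (Complex.cos (z l * t))
          * ξ k * (starRingEnd ℂ) (ξ l))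
        + (c:ℂ) * (Complex.sin (z k * t) * (starRingEnd ℂ) (Complex.sin (z l * t))
          * ξ k * (starRingEnd ℂ) (ξ l))) := by
        refine Finset.sum_congr rfl fun k _ => Finset.sum_congr rfl fun l _ => ?_
        rw [hcos k l]; ring
    _ = (c:ℂ) * (∑ k, ∑ l, Complex.cos (z k * t) * (starRingEnd ℂ) (Complex.cos (z l * t))
          * ξ k * (starRingEnd ℂ) (ξ l))
        + (c:ℂ) * (∑ k, ∑ l, Complex.sin (z k * t) * (starRingEnd ℂ) (Complex.sin (z l * t))
          * ξ k * (starRingEnd ℂ) (ξ l)) := by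
        simp only [Finset.sum_add_distrib, ← Finset.mul_sum]
    _ = _ := by
        rw [sum_sum_mul_conj, sum_sum_mul_conj]; push_cast; ring


lemma posdef_cos {p : ℝ} (hp : -1 < p) {c : ℝ} (hc : 0 ≤ c) (n : ℕ) (z ξ : Fin n → ℂ) :
    0 ≤ ∑ k, ∑ l, ((c:ℂ) * ∫ t in Ioo (0:ℝ) 1, (((1 - t^2)^p : ℝ):ℂ)
        * Complex.cos ((z k - (starRingEnd ℂ) (z l)) * t)) * ξ k * (starRingEnd ℂ) (ξ l) := by
  have hsub : Ioo (0:ℝ) 1 ⊆ Ioo (-1:ℝ) 1 := Ioo_subset_Ioo (by norm_num) le_rfl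
  set g : Fin n → Fin n → ℝ → ℂ := fun k l t => (((1 - t^2)^p : ℝ):ℂ)
    * Complex.cos ((z k - (starRingEnd ℂ) (z l)) * t) * ξ k * (starRingEnd ℂ) (ξ l) with hg
  have hgint : ∀ k l, IntegrableOn (g k l) (Ioo (0:ℝ) 1) := by
    intro k l
    exact (intOn_w_mul hp hsub measurableSet_Ioo
      (g := fun t => Complex.cos ((z k - (starRingEnd ℂ) (z l)) * t) * (ξ k * (starRingEnd ℂ) (ξ l)))
      (by fun_prop)).congr_fun (fun t _ => by simp only [hg]; ring) measurableSet_Ioo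
  have hstep1 : ∀ k l, ((c:ℂ) * ∫ t in Ioo (0:ℝ) 1, (((1 - t^2)^p : ℝ):ℂ)
        * Complex.cos ((z k - (starRingEnd ℂ) (z l)) * t)) * ξ k * (starRingEnd ℂ) (ξ l)
      = (c:ℂ) * ∫ t in Ioo (0:ℝ) 1, g k l t := by
    intro k l
    simp only [hg]
    rw [integral_mul_const, integral_mul_const]
    ring
  have hstep2 : ∑ k, ∑ l, (c:ℂ) * ∫ t in Ioo (0:ℝ) 1, g k l t
      = (c:ℂ) * ∫ t in Ioo (0:ℝ) 1, ∑ k, ∑ l, g k l t := by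
    simp only [← Finset.mul_sum]
    congr 1
    calc ∑ k, ∑ l, ∫ t in Ioo (0:ℝ) 1, g k l t
        = ∑ k, ∫ t in Ioo (0:ℝ) 1, ∑ l, g k l t :=
          Finset.sum_congr rfl fun k _ =>
            (integral_finset_sum _ fun l _ => hgint k l).symm
      _ = ∫ t in Ioo (0:ℝ) 1, ∑ k, ∑ l, g k l t :=
          (integral_finset_sum _ fun k _ =>
            integrable_finset_sum _ fun l _ => hgint k l).symm
  have hstep3 : ∫ t in Ioo (0:ℝ) 1, ∑ k, ∑ l, g k l t
      = ((∫ t in Ioo (0:ℝ) 1, (1 - t^2)^p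
          * (Complex.normSq (∑ k, Complex.cos (z k * t) * ξ k)
            + Complex.normSq (∑ k, Complex.sin (z k * t) * ξ k)) : ℝ) : ℂ) := by
    refine Eq.trans (setIntegral_congr_fun measurableSet_Ioo fun t _ => ?_) integral_ofReal
    simp only [hg]; exact pointwise_cos z ξ t ((1 - t^2)^p)
  have hR : 0 ≤ ∫ t in Ioo (0:ℝ) 1, (1 - t^2)^p
      * (Complex.normSq (∑ k, Complex.cos (z k * t) * ξ k)
        + Complex.normSq (∑ k, Complex.sin (z k * t) * ξ k)) := by
    refine setIntegral_nonneg measurableSet_Ioo fun t ht => ?_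
    have := Real.rpow_nonneg (show (0:ℝ) ≤ 1 - t^2 by nlinarith [ht.1, ht.2]) p
    exact mul_nonneg this (add_nonneg (Complex.normSq_nonneg _) (Complex.normSq_nonneg _))
  calc (0:ℂ) ≤ ((c * ∫ t in Ioo (0:ℝ) 1, (1 - t^2)^p
      * (Complex.normSq (∑ k, Complex.cos (z k * t) * ξ k)
        + Complex.normSq (∑ k, Complex.sin (z k * t) * ξ k)) : ℝ) : ℂ) :=
      Complex.zero_le_real.2 (mul_nonneg hc hR)
    _ = _ := by
      simp only [hstep1]
      rw [hstep2, hstep3]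
      push_cast
      ring

lemma posdef_exp {p : ℝ} (hp : -1 < p) {c : ℝ} (hc : 0 ≤ c) (n : ℕ) (z ξ : Fin n → ℂ) :
    0 ≤ ∑ k, ∑ l, ((c:ℂ) * ∫ t in Ioo (-1:ℝ) 1,
        Complex.exp (I * (z k - (starRingEnd ℂ) (z l)) * t) * (((1 - t^2)^p : ℝ):ℂ))
        * ξ k * (starRingEnd ℂ) (ξ l) := by
  set g : Fin n → Fin n → ℝ → ℂ := fun k l t =>
    Complex.exp (I * (z k - (starRingEnd ℂ) (z l)) * t) * (((1 - t^2)^p : ℝ):ℂ)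
      * ξ k * (starRingEnd ℂ) (ξ l) with hg
  have hgint : ∀ k l, IntegrableOn (g k l) (Ioo (-1:ℝ) 1) := by
    intro k l
    exact (intOn_w_mul hp (subset_refl _) measurableSet_Ioo
      (g := fun t => Complex.exp (I * (z k - (starRingEnd ℂ) (z l)) * t)
        * (ξ k * (starRingEnd ℂ) (ξ l)))
      (by fun_prop)).congr_fun (fun t _ => by simp only [hg]; ring) measurableSet_Ioo
  have hstep1 : ∀ k l, ((c:ℂ) * ∫ t in Ioo (-1:ℝ) 1,
        Complex.exp (I * (z k - (starRingEnd ℂ) (z l)) * t) * (((1 - t^2)^p : ℝ):ℂ))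
        * ξ k * (starRingEnd ℂ) (ξ l)
      = (c:ℂ) * ∫ t in Ioo (-1:ℝ) 1, g k l t := by
    intro k l
    simp only [hg]
    rw [integral_mul_const, integral_mul_const]
    ring
  have hstep2 : ∑ k, ∑ l, (c:ℂ) * ∫ t in Ioo (-1:ℝ) 1, g k l t
      = (c:ℂ) * ∫ t in Ioo (-1:ℝ) 1, ∑ k, ∑ l, g k l t := by
    simp only [← Finset.mul_sum]
    congr 1
    calc ∑ k, ∑ l, ∫ t in Ioo (-1:ℝ) 1, g k l t
        = ∑ k, ∫ t in Ioo (-1:ℝ) 1, ∑ l, g k l t :=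
          Finset.sum_congr rfl fun k _ =>
            (integral_finset_sum _ fun l _ => hgint k l).symm
      _ = ∫ t in Ioo (-1:ℝ) 1, ∑ k, ∑ l, g k l t :=
          (integral_finset_sum _ fun k _ =>
            integrable_finset_sum _ fun l _ => hgint k l).symm
  have hstep3 : ∫ t in Ioo (-1:ℝ) 1, ∑ k, ∑ l, g k l t
      = ((∫ t in Ioo (-1:ℝ) 1, (1 - t^2)^p
          * Complex.normSq (∑ k, Complex.exp (I * z k * t) * ξ k) : ℝ) : ℂ) := by
    refine Eq.trans (setIntegral_congr_fun measurableSet_Ioo fun t _ => ?_) integral_ofReal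
    simp only [hg]; exact pointwise_exp z ξ t ((1 - t^2)^p)
  have hR : 0 ≤ ∫ t in Ioo (-1:ℝ) 1, (1 - t^2)^p
      * Complex.normSq (∑ k, Complex.exp (I * z k * t) * ξ k) := by
    refine setIntegral_nonneg measurableSet_Ioo fun t ht => ?_
    have := Real.rpow_nonneg (show (0:ℝ) ≤ 1 - t^2 by nlinarith [ht.1, ht.2]) p
    exact mul_nonneg this (Complex.normSq_nonneg _)
  calc (0:ℂ) ≤ ((c * ∫ t in Ioo (-1:ℝ) 1, (1 - t^2)^p
      * Complex.normSq (∑ k, Complex.exp (I * z k * t) * ξ k) : ℝ) : ℂ) :=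
      Complex.zero_le_real.2 (mul_nonneg hc hR)
    _ = _ := by
      simp only [hstep1]
      rw [hstep2, hstep3]
      push_cast
      ring


lemma w_eq {t : ℝ} (h : 0 ≤ 1 - t^2) :
    (1 - t^2) ^ (-(1/2):ℝ) = (Real.sqrt (1 - t^2))⁻¹ := by
  rw [Real.rpow_neg h, ← Real.sqrt_eq_rpow]

lemma int_pow_w (n : ℕ) :
    IntegrableOn (fun t : ℝ => t^n * (1 - t^2) ^ (-(1/2):ℝ)) (Ioo (-1:ℝ) 1) := by
  refine Integrable.mono (intOn_w (by norm_num : (-1:ℝ) < -(1/2)))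
    (Measurable.aestronglyMeasurable (by fun_prop)).restrict ?_
  filter_upwards [ae_restrict_mem measurableSet_Ioo] with t ht
  have hw0 : (0:ℝ) ≤ (1 - t^2) ^ (-(1/2):ℝ) :=
    Real.rpow_nonneg (by nlinarith [ht.1, ht.2]) _
  have ht1 : |t| ≤ 1 := abs_le.2 ⟨ht.1.le, ht.2.le⟩
  rw [Real.norm_eq_abs, Real.norm_eq_abs, abs_mul,
    _root_.abs_of_nonneg hw0]
  have h1 : |t^n| ≤ 1 := by
    rw [_root_.abs_pow]
    exact pow_le_one₀ (abs_nonneg t) ht1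
  nlinarith [hw0, h1, abs_nonneg (t^n)]

lemma moment_odd (m : ℕ) :
    ∫ t in Ioo (-1:ℝ) 1, t^(2*m+1) * (1 - t^2) ^ (-(1/2):ℝ) = 0 := by
  set f : ℝ → ℝ := fun t => t^(2*m+1) * (1 - t^2) ^ (-(1/2):ℝ) with hf
  have hodd : ∀ t, f (-t) = - f t := by
    intro t
    have h2 : (1:ℝ) - (-t)^2 = 1 - t^2 := by ring
    have h3 : (-t)^(2*m+1) = -(t^(2*m+1)) := Odd.neg_pow ⟨m, by ring⟩ t
    simp only [hf, h2, h3, neg_mul]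
  have h1 : ∫ t in Ioo (-1:ℝ) 1, f t = ∫ t in (-1:ℝ)..1, f t := by
    rw [intervalIntegral.integral_of_le (by norm_num), integral_Ioc_eq_integral_Ioo]
  have h2 : ∫ t in (-1:ℝ)..1, f (-t) = ∫ t in (-1:ℝ)..1, f t := by
    simpa using intervalIntegral.integral_comp_neg f (a := -1) (b := 1)
  have h3 : ∫ t in (-1:ℝ)..1, f (-t) = - ∫ t in (-1:ℝ)..1, f t := by
    simp only [hodd]
    rw [intervalIntegral.integral_neg]
  rw [h1]
  linarith [h2, h3.symm.trans h2]

lemma moment_zero : ∫ t in Ioo (-1:ℝ) 1, (1 - t^2) ^ (-(1/2):ℝ) = π := by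
  have hInt : IntervalIntegrable (fun t : ℝ => (1 - t^2) ^ (-(1/2):ℝ)) volume (-1) 1 := by
    rw [intervalIntegrable_iff_integrableOn_Ioo_of_le (by norm_num)]
    exact intOn_w (by norm_num)
  have hftc := intervalIntegral.integral_eq_sub_of_hasDeriv_right_of_le (f := Real.arcsin)
    (f' := fun t : ℝ => (1 - t^2) ^ (-(1/2):ℝ)) (by norm_num : (-1:ℝ) ≤ 1)
    Real.continuous_arcsin.continuousOn ?_ hInt
  · rw [intervalIntegral.integral_of_le (by norm_num), integral_Ioc_eq_integral_Ioo] at hftc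
    rw [hftc, Real.arcsin_one, Real.arcsin_neg_one]
    ring
  · intro x hx
    have h := (Real.hasDerivAt_arcsin hx.1.ne' hx.2.ne).hasDerivWithinAt
      (s := Ioi x)
    convert h using 1
    show (1 - x^2) ^ (-(1/2):ℝ) = 1 / Real.sqrt (1 - x^2)
    rw [w_eq (by nlinarith [hx.1, hx.2]), one_div]

lemma moment_rec (m : ℕ) :
    (2*(m:ℝ)+2) * ∫ t in Ioo (-1:ℝ) 1, t^(2*m+2) * (1 - t^2) ^ (-(1/2):ℝ)
      = (2*(m:ℝ)+1) * ∫ t in Ioo (-1:ℝ) 1, t^(2*m) * (1 - t^2) ^ (-(1/2):ℝ) := by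
  set h : ℝ → ℝ := fun t => (2*(m:ℝ)+1) * (t^(2*m) * (1 - t^2) ^ (-(1/2):ℝ))
    - (2*(m:ℝ)+2) * (t^(2*m+2) * (1 - t^2) ^ (-(1/2):ℝ)) with hh
  set H : ℝ → ℝ := fun t => t^(2*m+1) * Real.sqrt (1 - t^2) with hH
  have hint : IntegrableOn h (Ioo (-1:ℝ) 1) :=
    ((int_pow_w (2*m)).const_mul _).sub ((int_pow_w (2*m+2)).const_mul _)
  have hIint : IntervalIntegrable h volume (-1) 1 := by
    rw [intervalIntegrable_iff_integrableOn_Ioo_of_le (by norm_num)]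
    exact hint
  have hHcont : Continuous H := by
    exact (continuous_pow _).mul (Real.continuous_sqrt.comp (by continuity))
  have hderiv : ∀ x ∈ Ioo (-1:ℝ) 1, HasDerivWithinAt H (h x) (Ioi x) x := by
    intro x hx
    have hx2 : (0:ℝ) < 1 - x^2 := by nlinarith [hx.1, hx.2]
    have hin : HasDerivAt (fun t : ℝ => 1 - t^2) (-(2*x)) x := by
      simpa using (hasDerivAt_pow 2 x).const_sub 1
    have hs : HasDerivAt (fun t : ℝ => Real.sqrt (1 - t^2))
        (1/(2*Real.sqrt (1-x^2)) * (-(2*x))) x :=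
      (Real.hasDerivAt_sqrt hx2.ne').comp x hin
    have hpow : HasDerivAt (fun t : ℝ => t^(2*m+1)) (((2*m+1 : ℕ) : ℝ) * x^(2*m)) x := by
      simpa using hasDerivAt_pow (2*m+1) x
    have hH' : HasDerivAt H (((2*m+1 : ℕ) : ℝ) * x^(2*m) * Real.sqrt (1-x^2)
        + x^(2*m+1) * (1/(2*Real.sqrt (1-x^2)) * (-(2*x)))) x := hpow.mul hs
    refine HasDerivAt.hasDerivWithinAt ?_
    convert hH' using 1
    · rfl
    · rfl
    have hs0 : (0:ℝ) < Real.sqrt (1-x^2) := Real.sqrt_pos.2 hx2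
    have hss : Real.sqrt (1-x^2) ^ 2 = 1 - x^2 := Real.sq_sqrt hx2.le
    simp only [hh]
    rw [w_eq hx2.le]
    push_cast
    field_simp
    linear_combination (-((2*(m:ℝ)+1) * x^(2*m))) * hss
  have hftc := intervalIntegral.integral_eq_sub_of_hasDeriv_right_of_le
    (by norm_num : (-1:ℝ) ≤ 1) hHcont.continuousOn hderiv hIint
  have hH1 : H 1 = 0 := by simp [hH]
  have hHm1 : H (-1) = 0 := by
    simp only [hH]
    norm_num
  rw [hH1, hHm1, sub_zero] at hftc
  rw [intervalIntegral.integral_of_le (by norm_num), integral_Ioc_eq_integral_Ioo] at hftc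
  have hsplit : ∫ t in Ioo (-1:ℝ) 1, h t
      = (2*(m:ℝ)+1) * (∫ t in Ioo (-1:ℝ) 1, t^(2*m) * (1 - t^2) ^ (-(1/2):ℝ))
        - (2*(m:ℝ)+2) * (∫ t in Ioo (-1:ℝ) 1, t^(2*m+2) * (1 - t^2) ^ (-(1/2):ℝ)) := by
    simp only [hh]
    rw [integral_sub ((int_pow_w (2*m)).const_mul _) ((int_pow_w (2*m+2)).const_mul _),
      integral_const_mul, integral_const_mul]
  rw [hsplit] at hftc
  linarith

lemma moment_even (m : ℕ) :
    ∫ t in Ioo (-1:ℝ) 1, t^(2*m) * (1 - t^2) ^ (-(1/2):ℝ)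
      = π * (2*m).factorial / (4^m * ((m.factorial : ℝ))^2) := by
  induction m with
  | zero => simpa using moment_zero
  | succ k ih =>
    have hrec := moment_rec k
    have hne : (2*(k:ℝ)+2) ≠ 0 := by positivity
    have h1 : ∫ t in Ioo (-1:ℝ) 1, t^(2*(k+1)) * (1 - t^2) ^ (-(1/2):ℝ)
        = (2*(k:ℝ)+1) / (2*(k:ℝ)+2)
          * ∫ t in Ioo (-1:ℝ) 1, t^(2*k) * (1 - t^2) ^ (-(1/2):ℝ) := by
      have h2 : 2*(k+1) = 2*k+2 := by ring
      rw [h2]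
      rw [div_mul_eq_mul_div, eq_div_iff hne]
      linarith [hrec]
    rw [h1, ih]
    have hfac : (((2*(k+1)).factorial : ℕ) : ℝ)
        = (2*(k:ℝ)+2) * (2*(k:ℝ)+1) * ((2*k).factorial : ℕ) := by
      have h3 : 2*(k+1) = (2*k+1) + 1 := by ring
      rw [h3, Nat.factorial_succ, Nat.factorial_succ]
      push_cast; ring
    have hfac2 : (((k+1).factorial : ℕ) : ℝ) = ((k:ℝ)+1) * (k.factorial : ℕ) := by
      rw [Nat.factorial_succ]; push_cast; ring
    rw [hfac, hfac2]
    have hfk : ((k.factorial : ℕ) : ℝ) ≠ 0 := Nat.cast_ne_zero.2 k.factorial_ne_zero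
    have h4k : ((4:ℝ))^k ≠ 0 := by positivity
    have hk1 : ((k:ℝ)+1) ≠ 0 := by positivity
    field_simp
    ring

lemma cexp_tsum (u : ℂ) : Complex.exp u = ∑' n : ℕ, u ^ n / n.factorial := by
  rw [Complex.exp_eq_exp_ℂ, NormedSpace.exp_eq_tsum_div]

lemma exp_int_eq (x : ℝ) :
    ∫ t in Ioo (-1:ℝ) 1, Complex.exp (I*(x:ℂ)*(t:ℂ)) * ((((1 - t^2) ^ (-(1/2):ℝ)) : ℝ):ℂ)
      = ∑' n : ℕ, (I*(x:ℂ))^n / n.factorial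
          * ((∫ t in Ioo (-1:ℝ) 1, t^n * (1 - t^2) ^ (-(1/2):ℝ) : ℝ) : ℂ) := by
  set F : ℕ → ℝ → ℂ := fun n t =>
    (I*(x:ℂ))^n / n.factorial * (((t^n * (1 - t^2) ^ (-(1/2):ℝ)) : ℝ) : ℂ) with hF
  have hFint : ∀ n, Integrable (F n) (volume.restrict (Ioo (-1:ℝ) 1)) := fun n =>
    ((int_pow_w n).ofReal).const_mul _
  have hFsum : Summable fun n => ∫ t in Ioo (-1:ℝ) 1, ‖F n t‖ := by
    have hM : 0 ≤ ∫ t in Ioo (-1:ℝ) 1, (1 - t^2) ^ (-(1/2):ℝ) :=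
      setIntegral_nonneg measurableSet_Ioo fun t ht =>
        Real.rpow_nonneg (by nlinarith [ht.1, ht.2]) _
    refine Summable.of_nonneg_of_le
      (fun n => integral_nonneg fun t => norm_nonneg _) (fun n => ?_)
      ((Real.summable_pow_div_factorial |x|).mul_right
        (∫ t in Ioo (-1:ℝ) 1, (1 - t^2) ^ (-(1/2):ℝ)))
    have hb : ∀ t ∈ Ioo (-1:ℝ) 1, ‖F n t‖ ≤ |x|^n / n.factorial * (1 - t^2) ^ (-(1/2):ℝ) := by
      intro t ht
      have hw0 : (0:ℝ) ≤ (1 - t^2) ^ (-(1/2):ℝ) :=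
        Real.rpow_nonneg (by nlinarith [ht.1, ht.2]) _
      have htn : |t^n| ≤ 1 := by
        rw [_root_.abs_pow]
        exact pow_le_one₀ (abs_nonneg t) (abs_le.2 ⟨ht.1.le, ht.2.le⟩)
      have hnorm : ‖F n t‖ = (|x|^n / n.factorial) * (|t^n| * (1 - t^2) ^ (-(1/2):ℝ)) := by
        simp only [hF]
        rw [norm_mul, norm_div, norm_pow, norm_mul, Complex.norm_I, one_mul,
          Complex.norm_real, Real.norm_eq_abs, Complex.norm_real, Real.norm_eq_abs,
          abs_mul, _root_.abs_of_nonneg hw0]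
        norm_num
      rw [hnorm]
      have h1 : |t^n| * (1 - t^2) ^ (-(1/2):ℝ) ≤ (1 - t^2) ^ (-(1/2):ℝ) := by
        nlinarith [abs_nonneg (t^n)]
      have h2 : (0:ℝ) ≤ |x|^n / n.factorial := by positivity
      calc (|x|^n / n.factorial) * (|t^n| * (1 - t^2) ^ (-(1/2):ℝ))
          ≤ (|x|^n / n.factorial) * (1 - t^2) ^ (-(1/2):ℝ) :=
            mul_le_mul_of_nonneg_left h1 h2
        _ = _ := rfl
    calc ∫ t in Ioo (-1:ℝ) 1, ‖F n t‖
        ≤ ∫ t in Ioo (-1:ℝ) 1, |x|^n / n.factorial * (1 - t^2) ^ (-(1/2):ℝ) :=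
          setIntegral_mono_on (hFint n).norm ((intOn_w (by norm_num)).const_mul _)
            measurableSet_Ioo hb
      _ = |x|^n / n.factorial * ∫ t in Ioo (-1:ℝ) 1, (1 - t^2) ^ (-(1/2):ℝ) :=
          integral_const_mul _ _
  have hpt : ∀ t : ℝ, ∑' n, F n t
      = Complex.exp (I*(x:ℂ)*(t:ℂ)) * ((((1 - t^2) ^ (-(1/2):ℝ)) : ℝ):ℂ) := by
    intro t
    have h1 : ∀ n, F n t = (I*(x:ℂ)*(t:ℂ))^n / n.factorial
        * ((((1 - t^2) ^ (-(1/2):ℝ)) : ℝ):ℂ) := by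
      intro n
      simp only [hF]
      push_cast
      ring
    rw [tsum_congr h1, tsum_mul_right, ← cexp_tsum]
  calc ∫ t in Ioo (-1:ℝ) 1, Complex.exp (I*(x:ℂ)*(t:ℂ)) * ((((1 - t^2) ^ (-(1/2):ℝ)) : ℝ):ℂ)
      = ∫ t in Ioo (-1:ℝ) 1, ∑' n, F n t :=
        setIntegral_congr_fun measurableSet_Ioo fun t _ => (hpt t).symm
    _ = ∑' n, ∫ t in Ioo (-1:ℝ) 1, F n t :=
        (integral_tsum_of_summable_integral_norm hFint hFsum).symm
    _ = _ := by
        refine tsum_congr fun n => ?_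
        simp only [hF]
        rw [integral_const_mul]
        congr 1
        exact integral_ofReal

lemma J0_eq (x : ℝ) :
    (1 / (π:ℂ)) * ∫ t in Ioo (-1:ℝ) 1,
        Complex.exp (I*(x:ℂ)*(t:ℂ)) * ((((1 - t^2) ^ (-(1/2):ℝ)) : ℝ):ℂ)
      = ∑' m : ℕ, (-1)^m / ((m.factorial : ℂ))^2 * ((x:ℂ)/2)^(2*m) := by
  rw [exp_int_eq x, ← tsum_mul_left]
  set c : ℕ → ℂ := fun n => 1/(π:ℂ) * ((I*(x:ℂ))^n / n.factorial
    * ((∫ t in Ioo (-1:ℝ) 1, t^n * (1 - t^2) ^ (-(1/2):ℝ) : ℝ) : ℂ)) with hc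
  have hinj : Function.Injective (fun m : ℕ => 2*m) := fun a b h => by simp only at h; omega
  have hsupp : Function.support c ⊆ Set.range (fun m : ℕ => 2*m) := by
    intro n hn
    by_contra hmem
    apply hn
    have hodd : ∃ k, n = 2*k+1 := by
      rcases Nat.even_or_odd n with ⟨k, hk⟩ | ⟨k, hk⟩
      · exact absurd ⟨k, show 2*k = n by omega⟩ hmem
      · exact ⟨k, hk⟩
    obtain ⟨k, rfl⟩ := hodd
    simp only [hc]
    rw [moment_odd k]
    simp
  rw [← Function.Injective.tsum_eq hinj hsupp]
  refine tsum_congr fun m => ?_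
  show c (2*m) = _
  simp only [hc]
  rw [moment_even m]
  have h1 : (I*(x:ℂ))^(2*m) = (-1)^m * (x:ℂ)^(2*m) := by
    rw [mul_pow, pow_mul, Complex.I_sq]
  have h2 : ((x:ℂ)/2)^(2*m) = (x:ℂ)^(2*m) / 4^m := by
    rw [div_pow]
    congr 1
    rw [pow_mul]
    norm_num
  have hπ : (π:ℂ) ≠ 0 := Complex.ofReal_ne_zero.2 Real.pi_ne_zero
  have hf1 : (((2*m).factorial : ℕ) : ℂ) ≠ 0 := Nat.cast_ne_zero.2 (2*m).factorial_ne_zero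
  have hf2 : ((m.factorial : ℕ) : ℂ) ≠ 0 := Nat.cast_ne_zero.2 m.factorial_ne_zero
  have h4 : ((4:ℂ))^m ≠ 0 := pow_ne_zero _ (by norm_num)
  rw [h1, h2]
  push_cast
  field_simp
end S19

/-- For `α > -1/2` the normalized Bessel function `𝒥_α` is an entire positive definite function;
in particular `z ↦ (1/π) ∫_{-1}^{1} e^{izt} (1-t²)^{-1/2} dt` is an entire positive definite
function agreeing with `J₀` on the real axis. -/
theorem stmt19 (α : ℝ) (hα : -(1 / 2 : ℝ) < α) :
    Differentiable ℂ (normBesselJ α) ∧ IsPosDefOnC (normBesselJ α) Set.univ ∧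
    Differentiable ℂ (fun z : ℂ =>
      (1 / (π : ℂ)) *
        ∫ t in Set.Ioo (-1 : ℝ) 1,
          Complex.exp (I * z * t) * (((1 - t ^ 2) ^ (-(1 / 2 : ℝ)) : ℝ) : ℂ)) ∧
    IsPosDefOnC (fun z : ℂ =>
      (1 / (π : ℂ)) *
        ∫ t in Set.Ioo (-1 : ℝ) 1,
          Complex.exp (I * z * t) * (((1 - t ^ 2) ^ (-(1 / 2 : ℝ)) : ℝ) : ℂ)) Set.univ ∧
    (∀ x : ℝ,
      (1 / (π : ℂ)) *
        ∫ t in Set.Ioo (-1 : ℝ) 1,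
          Complex.exp (I * (x : ℂ) * t) * (((1 - t ^ 2) ^ (-(1 / 2 : ℝ)) : ℝ) : ℂ) =
        besselJ0 (x : ℂ)) := by
  have hp : (-1:ℝ) < α - 1/2 := by linarith
  have hphalf : (-1:ℝ) < -(1/2:ℝ) := by norm_num
  have hc0 : 0 ≤ 1 / ((2:ℝ) ^ (α - 1) * Real.sqrt π * Real.Gamma (α + 1/2)) := by
    have h1 : (0:ℝ) < (2:ℝ) ^ (α - 1) := Real.rpow_pos_of_pos (by norm_num) _
    have h2 : (0:ℝ) < Real.sqrt π := Real.sqrt_pos.2 Real.pi_pos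
    have h3 : (0:ℝ) < Real.Gamma (α + 1/2) := Real.Gamma_pos_of_pos (by linarith)
    positivity
  have hpi : (1 / (π:ℂ)) = (((1/π : ℝ)):ℂ) := by push_cast; ring
  refine ⟨?_, ?_, ?_, ?_, ?_⟩
  · unfold normBesselJ
    exact (S19.diff_cos_int hp).const_mul _
  · intro n z _ ξ
    unfold normBesselJ
    exact S19.posdef_cos hp hc0 n z ξ
  · exact (S19.diff_exp_int hphalf).const_mul _
  · intro n z _ ξ
    simp only [hpi]
    exact S19.posdef_exp hphalf (by positivity) n z ξ
  · intro x
    unfold besselJ0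
    exact S19.J0_eq x
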